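/- For every α ∈ R, the value Q(α) is an integer, i.e. there exists n ∈ ℤ with Q(α) = n. -/

import Mathlib

open Polynomial

noncomputable def P (μ : ℤ) : ℤ[X] := X ^ 4 - C μ * X ^ 3 - C (2 * μ) * X + 4

noncomputable abbrev Rg (μ : ℤ) := AdjoinRoot (P μ)

noncomputable def tau (μ : ℤ) : Rg μ := AdjoinRoot.root (P μ)

noncomputable def Q (μ : ℤ) (α : Rg μ) : ℝ :=
  (1 / 2) * (((P μ).map (Int.castRingHom ℂ)).roots.attach.map
    (fun z => ‖AdjoinRoot.lift (Int.castRingHom ℂ) z.1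
      (by
        have h2 : Polynomial.eval z.1 ((P μ).map (Int.castRingHom ℂ)) = 0 :=
          (Polynomial.mem_roots'.mp z.2).2
        rwa [Polynomial.eval_map] at h2) α‖ ^ 2)).sum

private lemma stepA (A B C D u v : ℂ) (h : u * v = 2) :
    (A + B*u + C*u^2 + D*u^3) * (A + B*v + C*v^2 + D*v^3) =
      A^2 + 2*B^2 + 4*C^2 + 8*D^2 + (A*B + 2*B*C + 4*C*D)*(u+v)
        + (A*C + 2*B*D)*((u+v)^2 - 4) + A*D*((u+v)^3 - 6*(u+v)) := by
  linear_combination (4*D^2 + 2*D^2*u*v + D^2*u^2*v^2 + 2*C*D*v + 2*C*D*u + C*D*u*v^2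
    + C*D*u^2*v + 2*C^2 + C^2*u*v - 4*B*D + B*D*v^2 + B*D*u^2 + B*C*v + B*C*u + B^2
    - 3*A*D*v - 3*A*D*u - 2*A*C) * h

private lemma stepB (A B C D w1 w2 m : ℂ) (h1 : w1 + w2 = m) (h2 : w1*w2 = -4)
    (h3 : m^2 = 1) :
    (A^2 + 2*B^2 + 4*C^2 + 8*D^2 + (A*B + 2*B*C + 4*C*D)*w1
        + (A*C + 2*B*D)*(w1^2 - 4) + A*D*(w1^3 - 6*w1))
    + (A^2 + 2*B^2 + 4*C^2 + 8*D^2 + (A*B + 2*B*C + 4*C*D)*w2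
        + (A*C + 2*B*D)*(w2^2 - 4) + A*D*(w2^3 - 6*w2))
    = 2*A^2 + 4*B^2 + 8*C^2 + 16*D^2 + m*(A*B) + A*C + 7*(m*(A*D))
        + 2*(m*(B*C)) + 2*(B*D) + 4*(m*(C*D)) := by
  linear_combination (4*C*D + 2*B*D*m + 2*B*D*w2 + 2*B*D*w1 + 2*B*C - 6*A*D + A*D*m^2
      + A*D*w2*m + A*D*w2^2 + A*D*w1*m - A*D*w1*w2 + A*D*w1^2 + A*C*m + A*C*w2 + A*C*w1
      + A*B) * h1
    + (-4*B*D - 3*A*D*m - 2*A*C) * h2 + (2*B*D + A*D*m + A*C) * h3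

/-- The squared norm `Q` takes integer values on `R`. -/
theorem stmt12 (μ : ℤ) (hμ : μ = 1 ∨ μ = -1) (α : Rg μ) :
    ∃ n : ℤ, Q μ α = (n : ℝ) := by
  -- real square roots
  obtain ⟨s, hs_def⟩ : ∃ x : ℝ, x = Real.sqrt 17 := ⟨_, rfl⟩
  have hs0 : 0 ≤ s := hs_def ▸ Real.sqrt_nonneg _
  have hs : s^2 = 17 := by rw [hs_def]; exact Real.sq_sqrt (by norm_num)
  have hs5 : s ≤ 5 := by nlinarith
  have hμs : (μ:ℝ) * s ≤ 5 := by
    rcases hμ with h | h <;> rw [h] <;> push_cast <;> nlinarith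
  have hμs' : -5 ≤ (μ:ℝ) * s := by
    rcases hμ with h | h <;> rw [h] <;> push_cast <;> nlinarith
  obtain ⟨t, ht_def⟩ : ∃ x : ℝ, x = Real.sqrt ((7 - μ*s)/8) := ⟨_, rfl⟩
  obtain ⟨t', ht'_def⟩ : ∃ x : ℝ, x = Real.sqrt ((7 + μ*s)/8) := ⟨_, rfl⟩
  have ht : t^2 = (7 - μ*s)/8 := by rw [ht_def]; exact Real.sq_sqrt (by linarith)
  have ht' : t'^2 = (7 + μ*s)/8 := by rw [ht'_def]; exact Real.sq_sqrt (by linarith)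
  -- complex versions
  obtain ⟨mc, hmc_def⟩ : ∃ z : ℂ, z = (μ : ℂ) := ⟨_, rfl⟩
  obtain ⟨sc, hsc_def⟩ : ∃ z : ℂ, z = (s : ℂ) := ⟨_, rfl⟩
  obtain ⟨tc, htc_def⟩ : ∃ z : ℂ, z = (t : ℂ) := ⟨_, rfl⟩
  obtain ⟨tc', htc'_def⟩ : ∃ z : ℂ, z = (t' : ℂ) := ⟨_, rfl⟩
  have hmC : mc^2 = 1 := by
    rw [hmc_def]; rcases hμ with h | h <;> rw [h] <;> norm_num
  have hsC : sc^2 = 17 := by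
    rw [hsc_def, ← Complex.ofReal_pow, hs]; norm_num
  have htC : tc^2 = (7 - mc*sc)/8 := by
    rw [htc_def, hmc_def, hsc_def, ← Complex.ofReal_pow, ht]; push_cast; ring
  have htC' : tc'^2 = (7 + mc*sc)/8 := by
    rw [htc'_def, hmc_def, hsc_def, ← Complex.ofReal_pow, ht']; push_cast; ring
  -- the four roots
  obtain ⟨z1, hz1_def⟩ : ∃ z : ℂ, z = (mc + sc)/4 + tc * Complex.I := ⟨_, rfl⟩
  obtain ⟨z2, hz2_def⟩ : ∃ z : ℂ, z = (mc + sc)/4 - tc * Complex.I := ⟨_, rfl⟩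
  obtain ⟨z3, hz3_def⟩ : ∃ z : ℂ, z = (mc - sc)/4 + tc' * Complex.I := ⟨_, rfl⟩
  obtain ⟨z4, hz4_def⟩ : ∃ z : ℂ, z = (mc - sc)/4 - tc' * Complex.I := ⟨_, rfl⟩
  obtain ⟨c1, hc1_def⟩ : ∃ z : ℂ, z = (mc + sc)/2 := ⟨_, rfl⟩
  obtain ⟨c2, hc2_def⟩ : ∃ z : ℂ, z = (mc - sc)/2 := ⟨_, rfl⟩
  have m1 : z1 * z2 = 2 := by
    rw [hz1_def, hz2_def]
    linear_combination (-(tc^2)) * Complex.I_sq + htC + (1/16 : ℂ) * hsC + (1/16 : ℂ) * hmC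
  have m2 : z1 + z2 = c1 := by rw [hz1_def, hz2_def, hc1_def]; ring
  have m3 : z3 * z4 = 2 := by
    rw [hz3_def, hz4_def]
    linear_combination (-(tc'^2)) * Complex.I_sq + htC' + (1/16 : ℂ) * hsC + (1/16 : ℂ) * hmC
  have m4 : z3 + z4 = c2 := by rw [hz3_def, hz4_def, hc2_def]; ring
  have n1 : c1 + c2 = mc := by rw [hc1_def, hc2_def]; ring
  have n2 : c1 * c2 = -4 := by
    rw [hc1_def, hc2_def]
    linear_combination (1/4 : ℂ) * hmC - (1/4 : ℂ) * hsC
  -- conjugation swaps the roots within each pair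
  have hcz1 : (starRingEnd ℂ) z1 = z2 := by
    rw [hz1_def, hz2_def, hmc_def, hsc_def, htc_def]
    simp [map_add, map_sub, map_mul, map_div₀, map_ofNat, Complex.conj_ofReal, Complex.conj_I]
    ring
  have hcz3 : (starRingEnd ℂ) z3 = z4 := by
    rw [hz3_def, hz4_def, hmc_def, hsc_def, htc'_def]
    simp [map_add, map_sub, map_mul, map_div₀, map_ofNat, Complex.conj_ofReal, Complex.conj_I]
    ring
  -- factorization of P over ℂ
  have hmon : (P μ).Monic := by unfold P; monicity!
  have hfact : (P μ).map (Int.castRingHom ℂ)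
      = (({z1, z2, z3, z4} : Multiset ℂ).map (fun a => X - C a)).prod := by
    simp only [Multiset.insert_eq_cons, Multiset.map_cons, Multiset.map_singleton,
      Multiset.prod_cons, Multiset.prod_singleton]
    have e12 : (X - C z1) * (X - C z2) = X^2 - C c1 * X + C 2 := by
      have h : (X - C z1) * (X - C z2) = X^2 - C (z1 + z2) * X + C (z1 * z2) := by
        rw [C_add, C_mul]; ring
      rw [h, m1, m2]
    have e34 : (X - C z3) * (X - C z4) = X^2 - C c2 * X + C 2 := by
      have h : (X - C z3) * (X - C z4) = X^2 - C (z3 + z4) * X + C (z3 * z4) := by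
        rw [C_add, C_mul]; ring
      rw [h, m3, m4]
    have hre : (X - C z1) * ((X - C z2) * ((X - C z3) * (X - C z4)))
        = ((X - C z1) * (X - C z2)) * ((X - C z3) * (X - C z4)) := by ring
    rw [hre, e12, e34]
    have hC1 : C c1 + C c2 = C mc := by rw [← C_add, n1]
    have hC2 : C c1 * C c2 = (-4 : ℂ[X]) := by
      rw [← C_mul, n2]; simp [map_neg, map_ofNat]
    have hmap : (P μ).map (Int.castRingHom ℂ)
        = X^4 - C mc * X^3 - (2 : ℂ[X]) * C mc * X + 4 := by
      rw [hmc_def]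
      simp only [P, Polynomial.map_add, Polynomial.map_sub, Polynomial.map_pow,
        Polynomial.map_mul, Polynomial.map_X, Polynomial.map_C, Polynomial.map_ofNat,
        Int.coe_castRingHom, Int.cast_mul, C_mul]
      norm_num
      exact Or.inl (map_ofNat C 2)
    rw [hmap]
    have hC2' : C (2 : ℂ) = (2 : ℂ[X]) := map_ofNat C 2
    rw [hC2']
    linear_combination (X^3 + 2*X) * hC1 + (-(X^2)) * hC2
  have hroots : ((P μ).map (Int.castRingHom ℂ)).roots = {z1, z2, z3, z4} := by
    rw [hfact, roots_multiset_prod_X_sub_C]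
  have hPz : ∀ z ∈ ({z1, z2, z3, z4} : Multiset ℂ),
      (P μ).eval₂ (Int.castRingHom ℂ) z = 0 := by
    intro z hz
    rw [← eval_map, hfact, eval_multiset_prod]
    refine Multiset.prod_eq_zero ?_
    refine Multiset.mem_map.mpr ⟨X - C z, Multiset.mem_map.mpr ⟨z, hz, rfl⟩, by simp⟩
  -- reduce α to a cubic
  induction α using AdjoinRoot.induction_on with
  | ih f =>
  have hdegP : (P μ).degree = 4 := by unfold P; compute_degree!
  set r : ℤ[X] := f %ₘ P μ with hr_def
  have hrdeg : r.natDegree < 4 := by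
    rcases eq_or_ne r 0 with h | h
    · rw [h]; simp
    · have hlt := degree_modByMonic_lt f hmon
      rw [hdegP] at hlt
      exact (natDegree_lt_iff_degree_lt h).mpr (by exact_mod_cast hlt)
  have hfr : ∀ z : ℂ, (P μ).eval₂ (Int.castRingHom ℂ) z = 0 →
      f.eval₂ (Int.castRingHom ℂ) z = r.eval₂ (Int.castRingHom ℂ) z := by
    intro z hz
    conv_lhs => rw [← modByMonic_add_div f (P μ)]
    rw [eval₂_add, eval₂_mul, hz, zero_mul, add_zero]
  obtain ⟨a, ha_def⟩ : ∃ x : ℤ, x = r.coeff 0 := ⟨_, rfl⟩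
  obtain ⟨b, hb_def⟩ : ∃ x : ℤ, x = r.coeff 1 := ⟨_, rfl⟩
  obtain ⟨c, hc_def⟩ : ∃ x : ℤ, x = r.coeff 2 := ⟨_, rfl⟩
  obtain ⟨d, hd_def⟩ : ∃ x : ℤ, x = r.coeff 3 := ⟨_, rfl⟩
  have hF : ∀ z : ℂ, f.eval₂ (Int.castRingHom ℂ) z = r.eval₂ (Int.castRingHom ℂ) z →
      f.eval₂ (Int.castRingHom ℂ) z
        = (a : ℂ) + (b : ℂ)*z + (c : ℂ)*z^2 + (d : ℂ)*z^3 := by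
    intro z hz
    rw [hz, eval₂_eq_sum_range' _ hrdeg]
    simp only [Finset.sum_range_succ, Finset.sum_range_zero, ha_def, hb_def, hc_def, hd_def]
    simp only [eq_intCast]
    ring
  -- the integer value
  refine ⟨2*a^2 + 4*b^2 + 8*c^2 + 16*d^2 + μ*(a*b) + a*c + 7*(μ*(a*d))
    + 2*(μ*(b*c)) + 2*(b*d) + 4*(μ*(c*d)), ?_⟩
  -- rewrite Q as an explicit four-term sum
  have hQ : Q μ (AdjoinRoot.mk (P μ) f)
      = (1/2) * ((({z1, z2, z3, z4} : Multiset ℂ).map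
          (fun z => ‖f.eval₂ (Int.castRingHom ℂ) z‖^2)).sum) := by
    rw [Q]
    congr 1
    simp only [AdjoinRoot.lift_mk]
    rw [show (fun z : {x // x ∈ ((P μ).map (Int.castRingHom ℂ)).roots} =>
          ‖f.eval₂ (Int.castRingHom ℂ) z.1‖^2)
        = (fun w => ‖f.eval₂ (Int.castRingHom ℂ) w‖^2) ∘ Subtype.val from rfl,
      ← Multiset.map_map, Multiset.attach_map_val, hroots]
  rw [hQ]
  simp only [Multiset.insert_eq_cons, Multiset.map_cons, Multiset.map_singleton,
    Multiset.sum_cons, Multiset.sum_singleton]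
  have h1 := hF z1 (hfr z1 (hPz z1 (by simp)))
  have h2 := hF z2 (hfr z2 (hPz z2 (by simp)))
  have h3 := hF z3 (hfr z3 (hPz z3 (by simp)))
  have h4 := hF z4 (hfr z4 (hPz z4 (by simp)))
  rw [h1, h2, h3, h4]
  -- conjugation relations between the evaluations
  have hcF1 : (starRingEnd ℂ) ((a : ℂ) + (b : ℂ)*z1 + (c : ℂ)*z1^2 + (d : ℂ)*z1^3)
      = (a : ℂ) + (b : ℂ)*z2 + (c : ℂ)*z2^2 + (d : ℂ)*z2^3 := by
    simp only [map_add, map_mul, map_pow, map_intCast, hcz1]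
  have hcF3 : (starRingEnd ℂ) ((a : ℂ) + (b : ℂ)*z3 + (c : ℂ)*z3^2 + (d : ℂ)*z3^3)
      = (a : ℂ) + (b : ℂ)*z4 + (c : ℂ)*z4^2 + (d : ℂ)*z4^3 := by
    simp only [map_add, map_mul, map_pow, map_intCast, hcz3]
  -- the key complex identity
  have key : ((a : ℂ) + (b : ℂ)*z1 + (c : ℂ)*z1^2 + (d : ℂ)*z1^3)
        * ((a : ℂ) + (b : ℂ)*z2 + (c : ℂ)*z2^2 + (d : ℂ)*z2^3)
      + ((a : ℂ) + (b : ℂ)*z3 + (c : ℂ)*z3^2 + (d : ℂ)*z3^3)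
        * ((a : ℂ) + (b : ℂ)*z4 + (c : ℂ)*z4^2 + (d : ℂ)*z4^3)
      = ((2*a^2 + 4*b^2 + 8*c^2 + 16*d^2 + μ*(a*b) + a*c + 7*(μ*(a*d))
          + 2*(μ*(b*c)) + 2*(b*d) + 4*(μ*(c*d)) : ℤ) : ℂ) := by
    rw [stepA _ _ _ _ _ _ m1, stepA _ _ _ _ _ _ m3, m2, m4,
      stepB _ _ _ _ _ _ _ n1 n2 hmC, hmc_def]
    push_cast
    ring
  -- pass to norms
  have habs1 : ((a : ℂ) + (b : ℂ)*z1 + (c : ℂ)*z1^2 + (d : ℂ)*z1^3)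
        * ((a : ℂ) + (b : ℂ)*z2 + (c : ℂ)*z2^2 + (d : ℂ)*z2^3)
      = ((‖(a : ℂ) + (b : ℂ)*z1 + (c : ℂ)*z1^2 + (d : ℂ)*z1^3‖^2 : ℝ) : ℂ) := by
    rw [← hcF1, Complex.mul_conj, Complex.normSq_eq_norm_sq]
  have habs3 : ((a : ℂ) + (b : ℂ)*z3 + (c : ℂ)*z3^2 + (d : ℂ)*z3^3)
        * ((a : ℂ) + (b : ℂ)*z4 + (c : ℂ)*z4^2 + (d : ℂ)*z4^3)
      = ((‖(a : ℂ) + (b : ℂ)*z3 + (c : ℂ)*z3^2 + (d : ℂ)*z3^3‖^2 : ℝ) : ℂ) := by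
    rw [← hcF3, Complex.mul_conj, Complex.normSq_eq_norm_sq]
  have hn2 : ‖(a : ℂ) + (b : ℂ)*z2 + (c : ℂ)*z2^2 + (d : ℂ)*z2^3‖
      = ‖(a : ℂ) + (b : ℂ)*z1 + (c : ℂ)*z1^2 + (d : ℂ)*z1^3‖ := by
    rw [← hcF1]; exact RCLike.norm_conj _
  have hn4 : ‖(a : ℂ) + (b : ℂ)*z4 + (c : ℂ)*z4^2 + (d : ℂ)*z4^3‖
      = ‖(a : ℂ) + (b : ℂ)*z3 + (c : ℂ)*z3^2 + (d : ℂ)*z3^3‖ := by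
    rw [← hcF3]; exact RCLike.norm_conj _
  rw [hn2, hn4]
  have hreal : ‖(a : ℂ) + (b : ℂ)*z1 + (c : ℂ)*z1^2 + (d : ℂ)*z1^3‖^2
      + ‖(a : ℂ) + (b : ℂ)*z3 + (c : ℂ)*z3^2 + (d : ℂ)*z3^3‖^2
      = ((2*a^2 + 4*b^2 + 8*c^2 + 16*d^2 + μ*(a*b) + a*c + 7*(μ*(a*d))
          + 2*(μ*(b*c)) + 2*(b*d) + 4*(μ*(c*d)) : ℤ) : ℝ) := by
    have := key
    rw [habs1, habs3] at this
    exact_mod_cast this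
  push_cast at hreal ⊢
  linarith
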